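/- Let n ≥ 3 and let r be a positive integer with 1 ≤ r ≤ ⌊n/2⌋ − 1. Then the curling number of the r-th power of the path graph P_n equals n − 2r. -/

import Mathlib

open Finset

/-- The degree of a vertex `v` in a simple graph `G`: the number of its neighbours. -/
noncomputable def gdeg {V : Type*} (G : SimpleGraph V) (v : V) : ℕ :=
  (G.neighborSet v).ncard

/-- The curling number of a finite simple graph: the maximum number of vertices
of `G` sharing a common degree. -/
noncomputable def curlingNumber {V : Type*} [Fintype V] (G : SimpleGraph V) : ℕ :=
  Finset.univ.sup fun v => (Finset.univ.filter fun u => gdeg G u = gdeg G v).card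

/-- The `r`-th power of a simple graph `G`: same vertex set, two distinct vertices
adjacent iff their distance in `G` is (finite and) at most `r`. -/
def SimpleGraph.power {V : Type*} (G : SimpleGraph V) (r : ℕ) : SimpleGraph V where
  Adj u v := u ≠ v ∧ G.Reachable u v ∧ G.dist u v ≤ r
  symm := by
    constructor
    rintro u v ⟨h1, h2, h3⟩
    exact ⟨h1.symm, h2.symm, by rwa [SimpleGraph.dist_comm]⟩
  loopless := by
    constructor
    rintro v ⟨h1, -, -⟩
    exact h1 rfl

section aux
open SimpleGraph

lemma nat_dist_eq (a b : ℕ) : Nat.dist a b = a - b + (b - a) := rfl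

/-- A walk in the path graph from `a` to `b` (with `a ≤ b`) of length `b - a`. -/
lemma pathGraph_exists_walk {n : ℕ} (k : ℕ) (a b : Fin n) (hab : a.val ≤ b.val)
    (hk : b.val = a.val + k) :
    ∃ w : (pathGraph n).Walk a b, w.length = k := by
  induction k generalizing b with
  | zero =>
    have : a = b := Fin.ext (by omega)
    subst this
    exact ⟨SimpleGraph.Walk.nil, rfl⟩
  | succ k ih =>
    have hb' : a.val + k < n := by omega
    set b' : Fin n := ⟨a.val + k, hb'⟩ with hb'def
    obtain ⟨w, hw⟩ := ih b' (by show a.val ≤ a.val + k; omega) rfl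
    have hadj : (pathGraph n).Adj b' b := by
      rw [pathGraph_adj]
      left; simp [hb'def]; omega
    exact ⟨w.concat hadj, by simp [hw]⟩

lemma pathGraph_walk_length_ge {n : ℕ} {a b : Fin n} (w : (pathGraph n).Walk a b) :
    Nat.dist a.val b.val ≤ w.length := by
  induction w with
  | nil => simp [Nat.dist_self]
  | @cons u c v h p ih =>
    have h1 : Nat.dist u.val c.val = 1 := by
      rw [pathGraph_adj] at h
      rw [nat_dist_eq]
      rcases h with h | h <;> omega
    calc Nat.dist u.val v.val ≤ Nat.dist u.val c.val + Nat.dist c.val v.val :=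
          Nat.dist.triangle_inequality _ _ _
      _ ≤ 1 + p.length := by omega
      _ = (SimpleGraph.Walk.cons h p).length := by simp [Nat.add_comm]

lemma power_adj {n r : ℕ} (u v : Fin n) :
    ((pathGraph n).power r).Adj u v ↔ u ≠ v ∧ Nat.dist u.val v.val ≤ r := by
  constructor
  · rintro ⟨h1, h2, h3⟩
    obtain ⟨w, hw⟩ := h2.exists_walk_length_eq_dist
    exact ⟨h1, le_trans (by rw [← hw]; exact pathGraph_walk_length_ge w) h3⟩
  · rintro ⟨h1, h2⟩
    rw [nat_dist_eq] at h2
    rcases le_total u.val v.val with h | h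
    · obtain ⟨w, hw⟩ := pathGraph_exists_walk (v.val - u.val) u v h (by omega)
      refine ⟨h1, ⟨w⟩, le_trans (SimpleGraph.dist_le w) ?_⟩
      omega
    · obtain ⟨w, hw⟩ := pathGraph_exists_walk (u.val - v.val) v u h (by omega)
      refine ⟨h1, ⟨w.reverse⟩, le_trans (SimpleGraph.dist_le w.reverse) ?_⟩
      rw [SimpleGraph.Walk.length_reverse]
      omega

open scoped Classical in
lemma card_filter_val (n : ℕ) (S : Finset ℕ) (hS : ∀ k ∈ S, k < n) :
    (Finset.univ.filter (fun u : Fin n => u.val ∈ S)).card = S.card := by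
  apply Finset.card_bij (fun u _ => u.val)
  · intro a ha; simpa using ha
  · intro a ha b hb hab; exact Fin.ext hab
  · intro b hb
    exact ⟨⟨b, hS b hb⟩, by simpa using hb, rfl⟩

open scoped Classical in
lemma gdeg_power (n r : ℕ) (v : Fin n) :
    gdeg ((pathGraph n).power r) v = min (v.val + r) (n - 1) - (v.val - r) := by
  have hv : v.val < n := v.isLt
  have hset : ((pathGraph n).power r).neighborSet v
      = ↑(Finset.univ.filter (fun u : Fin n =>
          u.val ∈ (Finset.Icc (v.val - r) (min (v.val + r) (n - 1))).erase v.val)) := by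
    ext u
    simp only [SimpleGraph.mem_neighborSet, Finset.coe_filter, Set.mem_setOf_eq,
      Finset.mem_univ, true_and, Finset.mem_erase, Finset.mem_Icc]
    rw [power_adj, nat_dist_eq]
    have hu : u.val < n := u.isLt
    constructor
    · rintro ⟨h1, h2⟩
      have hne : u.val ≠ v.val := fun h => h1 (Fin.ext h).symm
      -- note adjacency is Adj v u, dist is from v to u
      exact ⟨hne, by omega, by omega⟩
    · rintro ⟨h1, h2, h3⟩
      exact ⟨fun h => h1 (by rw [h]), by omega⟩
  rw [gdeg, hset, Set.ncard_coe_finset, card_filter_val]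
  · rw [Finset.card_erase_of_mem, Nat.card_Icc]
    · omega
    · simp only [Finset.mem_Icc]
      omega
  · intro k hk
    simp only [Finset.mem_erase, Finset.mem_Icc] at hk
    omega

/-- For `n ≥ 3` and `1 ≤ r ≤ ⌊n/2⌋ - 1`, the curling number of the `r`-th
power of the path graph `P_n` is `n - 2r`. -/
theorem curlingNumber_pathGraph_power_of_le (n r : ℕ) (hn : 3 ≤ n)
    (hr1 : 1 ≤ r) (hr2 : r ≤ n / 2 - 1) :
    curlingNumber ((SimpleGraph.pathGraph n).power r) = n - 2 * r := by
  classical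
  have h2r : 2 * r + 2 ≤ n := by omega
  set f : ℕ → ℕ := fun i => min (i + r) (n - 1) - (i - r) with hf
  have hgdeg : ∀ v : Fin n, gdeg ((pathGraph n).power r) v = f v.val :=
    fun v => gdeg_power n r v
  have hmid : ∀ v : Fin n, f v.val = 2 * r →
      (Finset.univ.filter fun u : Fin n =>
        gdeg ((pathGraph n).power r) u = gdeg ((pathGraph n).power r) v).card = n - 2 * r := by
    intro v hv
    have heq : (Finset.univ.filter fun u : Fin n =>
        gdeg ((pathGraph n).power r) u = gdeg ((pathGraph n).power r) v)
        = Finset.univ.filter fun u : Fin n => u.val ∈ Finset.Icc r (n - 1 - r) := by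
      apply Finset.filter_congr
      intro u _
      rw [hgdeg, hgdeg, hv]
      have hu := u.isLt
      simp only [Finset.mem_Icc, hf]
      constructor <;> intro h <;> omega
    rw [heq, card_filter_val]
    · rw [Nat.card_Icc]; omega
    · intro k hk; simp only [Finset.mem_Icc] at hk; omega
  rw [curlingNumber]
  apply le_antisymm
  · apply Finset.sup_le
    intro v _
    by_cases hv : f v.val = 2 * r
    · rw [hmid v hv]
    · set c := f v.val with hc
      have hsub : (Finset.univ.filter fun u : Fin n =>
          gdeg ((pathGraph n).power r) u = gdeg ((pathGraph n).power r) v)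
          ⊆ Finset.univ.filter fun u : Fin n =>
              u.val ∈ ({c - r, n - 1 + r - c} : Finset ℕ) := by
        intro u hu
        simp only [Finset.mem_filter, Finset.mem_univ, true_and] at hu ⊢
        rw [hgdeg, hgdeg, ← hc] at hu
        simp only [Finset.mem_insert, Finset.mem_singleton]
        have hun := u.isLt
        have hvn := v.isLt
        simp only [hf] at hu hv hc
        omega
      calc (Finset.univ.filter fun u : Fin n =>
              gdeg ((pathGraph n).power r) u = gdeg ((pathGraph n).power r) v).card
          ≤ (Finset.univ.filter fun u : Fin n =>
              u.val ∈ ({c - r, n - 1 + r - c} : Finset ℕ)).card := Finset.card_le_card hsub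
        _ ≤ ({c - r, n - 1 + r - c} : Finset ℕ).card := by
            apply Finset.card_le_card_of_injOn (fun u => u.val)
            · intro u hu; simpa using hu
            · intro a _ b _ hab; exact Fin.ext hab
        _ ≤ 2 := le_trans (Finset.card_insert_le _ _) (by simp)
        _ ≤ n - 2 * r := by omega
  · have hrn : r < n := by omega
    set v0 : Fin n := ⟨r, hrn⟩ with hv0
    have hfv0 : f v0.val = 2 * r := by
      simp only [hf, hv0]
      omega
    calc n - 2 * r
        = (Finset.univ.filter fun u : Fin n =>
            gdeg ((pathGraph n).power r) u = gdeg ((pathGraph n).power r) v0).card :=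
          (hmid v0 hfv0).symm
      _ ≤ _ := Finset.le_sup (f := fun v : Fin n => (Finset.univ.filter fun u : Fin n =>
            gdeg ((pathGraph n).power r) u = gdeg ((pathGraph n).power r) v).card)
            (Finset.mem_univ v0)

end aux
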